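/- Let X and Y be locally compact Hausdorff spaces, let E be a real Banach space, let F be a strictly convex real Banach space, and let T : C₀(X,E) → C₀(Y,F) be a linear isometry. For x ∈ X and a unit functional μ ∈ E*, set S_{x,μ} = {f ∈ C₀(X,E) : μ(f(x)) = ‖f‖ = 1} and Q_{x,μ} = {y ∈ Y : there exists a unit ν ∈ F* with ν((Tf)(y)) = 1 for all f ∈ S_{x,μ}}, and let Q_x be the union of the sets Q_{x,μ} over all unit μ ∈ E* with S_{x,μ} nonempty. Then for x₁ ≠ x₂ in X, the sets Q_{x₁} and Q_{x₂} are disjoint. -/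

import Mathlib

open ZeroAtInfty

/-- The set `Q_x`: all `y ∈ Y` lying in `Q_{x,μ}` for some unit functional `μ ∈ E*`
with `S_{x,μ} = {f : μ (f x) = ‖f‖ = 1}` nonempty, where `y ∈ Q_{x,μ}` means that some
unit functional `ν ∈ F*` satisfies `ν ((T f) y) = 1` for all `f ∈ S_{x,μ}`. -/
def Qset {X Y E F : Type*}
    [TopologicalSpace X] [TopologicalSpace Y]
    [NormedAddCommGroup E] [NormedSpace ℝ E]
    [NormedAddCommGroup F] [NormedSpace ℝ F]
    (T : C₀(X, E) →ₗᵢ[ℝ] C₀(Y, F)) (x : X) : Set Y :=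
  {y : Y | ∃ μ : StrongDual ℝ E, ‖μ‖ = 1 ∧
    (∃ f : C₀(X, E), μ (f x) = 1 ∧ ‖f‖ = 1) ∧
    ∃ ν : StrongDual ℝ F, ‖ν‖ = 1 ∧
      ∀ f : C₀(X, E), μ (f x) = 1 → ‖f‖ = 1 → ν (T f y) = 1}

/-- A compactly supported bump times a fixed vector, as an element of `C₀(X, E)`. -/
noncomputable def Qbump {X E : Type*} [TopologicalSpace X]
    [NormedAddCommGroup E] [NormedSpace ℝ E]
    (φ : C(X, ℝ)) (hφ : HasCompactSupport φ) (e : E) : C₀(X, E) :=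
  ⟨⟨fun x => φ x • e, (map_continuous φ).smul continuous_const⟩, by
    refine Filter.Tendsto.congr' ?_ tendsto_const_nhds
    filter_upwards [hφ.isCompact.compl_mem_cocompact] with x hx
    simp [image_eq_zero_of_notMem_tsupport hx]⟩

@[simp] lemma Qbump_apply {X E : Type*} [TopologicalSpace X]
    [NormedAddCommGroup E] [NormedSpace ℝ E]
    (φ : C(X, ℝ)) (hφ : HasCompactSupport φ) (e : E) (x : X) :
    Qbump φ hφ e x = φ x • e := rfl

lemma Qset_one_le_norm {F : Type*} [NormedAddCommGroup F] [NormedSpace ℝ F]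
    (ν : StrongDual ℝ F) (hν : ‖ν‖ = 1) {w : F} (h : ν w = 1) : 1 ≤ ‖w‖ := by
  have h1 := ν.le_opNorm w
  rw [hν, one_mul] at h1
  calc (1:ℝ) = ν w := h.symm
    _ ≤ ‖ν w‖ := le_abs_self _
    _ ≤ ‖w‖ := h1

lemma Qset_norm_le_one {X E : Type*} [TopologicalSpace X]
    [NormedAddCommGroup E] [NormedSpace ℝ E]
    {g : C₀(X, E)} (h : ∀ x, ‖g x‖ ≤ 1) : ‖g‖ ≤ 1 := by
  rw [← ZeroAtInftyContinuousMap.norm_toBCF_eq_norm]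
  exact (BoundedContinuousFunction.norm_le (by norm_num)).mpr h

lemma Qset_coe_le_norm {X E : Type*} [TopologicalSpace X]
    [NormedAddCommGroup E] [NormedSpace ℝ E]
    (g : C₀(X, E)) (x : X) : ‖g x‖ ≤ ‖g‖ := by
  rw [← ZeroAtInftyContinuousMap.norm_toBCF_eq_norm]
  exact g.toBCF.norm_coe_le_norm x

set_option maxHeartbeats 1000000 in
/-- If `F` is strictly convex and `T : C₀(X, E) → C₀(Y, F)` is a linear isometry, then the
sets `Q_{x₁}` and `Q_{x₂}` are disjoint whenever `x₁ ≠ x₂`. -/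
theorem Qset_disjoint {X Y E F : Type*}
    [TopologicalSpace X] [LocallyCompactSpace X] [T2Space X]
    [TopologicalSpace Y] [LocallyCompactSpace Y] [T2Space Y]
    [NormedAddCommGroup E] [NormedSpace ℝ E] [CompleteSpace E]
    [NormedAddCommGroup F] [NormedSpace ℝ F] [CompleteSpace F]
    (hF : ∀ x y : F, x ≠ y → ‖x‖ = 1 → ‖y‖ = 1 → ‖x + y‖ < 2)
    (T : C₀(X, E) →ₗᵢ[ℝ] C₀(Y, F))
    (x₁ x₂ : X) (hx : x₁ ≠ x₂) :
    Disjoint (Qset T x₁) (Qset T x₂) := by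
  rw [Set.disjoint_left]
  rintro y ⟨μ₁, hμ₁, ⟨f₁, hf₁x, hf₁n⟩, ν₁, hν₁, hT₁⟩ ⟨μ₂, hμ₂, ⟨f₂, hf₂x, hf₂n⟩, ν₂, hν₂, hT₂⟩
  -- separate x₁ and x₂ by disjoint open sets
  obtain ⟨U₁, U₂, hU₁o, hU₂o, hx₁U, hx₂U, hUd⟩ := t2_separation hx
  -- Urysohn bumps
  obtain ⟨φ₁, hφ₁1, hφ₁0, hφ₁c, hφ₁I⟩ :=
    exists_continuous_one_zero_of_isCompact (s := {x₁}) isCompact_singleton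
      hU₁o.isClosed_compl (Set.disjoint_singleton_left.mpr (by simp [hx₁U]))
  obtain ⟨φ₂, hφ₂1, hφ₂0, hφ₂c, hφ₂I⟩ :=
    exists_continuous_one_zero_of_isCompact (s := {x₂}) isCompact_singleton
      hU₂o.isClosed_compl (Set.disjoint_singleton_left.mpr (by simp [hx₂U]))
  set e₁ : E := f₁ x₁ with he₁def
  set e₂ : E := f₂ x₂ with he₂def
  have he₁ : ‖e₁‖ = 1 := le_antisymm ((Qset_coe_le_norm f₁ x₁).trans_eq hf₁n)
    (Qset_one_le_norm μ₁ hμ₁ hf₁x)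
  have he₂ : ‖e₂‖ = 1 := le_antisymm ((Qset_coe_le_norm f₂ x₂).trans_eq hf₂n)
    (Qset_one_le_norm μ₂ hμ₂ hf₂x)
  set g₁ : C₀(X, E) := Qbump φ₁ hφ₁c e₁ with hg₁def
  set g₂ : C₀(X, E) := Qbump φ₂ hφ₂c e₂ with hg₂def
  -- values of the bumps
  have hφ₁x₁ : φ₁ x₁ = 1 := hφ₁1 rfl
  have hφ₂x₂ : φ₂ x₂ = 1 := hφ₂1 rfl
  have hφ₂x₁ : φ₂ x₁ = 0 := hφ₂0 (hUd.subset_compl_right hx₁U)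
  have hφ₁x₂ : φ₁ x₂ = 0 := hφ₁0 (hUd.symm.subset_compl_right hx₂U)
  -- at each point, at most one bump is nonzero
  have hdisj : ∀ x : X, φ₁ x = 0 ∨ φ₂ x = 0 := by
    intro x
    by_cases hx1 : x ∈ U₁
    · exact Or.inr (hφ₂0 (hUd.subset_compl_right hx1))
    · exact Or.inl (hφ₁0 hx1)
  -- pointwise norm bounds
  have hb : ∀ (c : ℝ) (x : X), |c| = 1 → ‖g₁ x + c • g₂ x‖ ≤ 1 := by
    intro c x hc
    rcases hdisj x with h | h
    · simp only [hg₁def, hg₂def, Qbump_apply, h, zero_smul, zero_add]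
      rw [norm_smul, norm_smul, Real.norm_eq_abs, Real.norm_eq_abs, hc, one_mul, he₂,
        abs_of_nonneg (hφ₂I x).1, mul_one]
      exact (hφ₂I x).2
    · simp only [hg₁def, hg₂def, Qbump_apply, h, zero_smul, smul_zero, add_zero]
      rw [norm_smul, Real.norm_eq_abs, he₁, abs_of_nonneg (hφ₁I x).1, mul_one]
      exact (hφ₁I x).2
  -- the three test functions: g₁ + g₂, g₁ - g₂, and g₁ itself, g₂ itself
  have hmem : ∀ c : ℝ, |c| = 1 → μ₁ ((g₁ + c • g₂) x₁) = 1 ∧ ‖g₁ + c • g₂‖ = 1 := by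
    intro c hc
    have hval : (g₁ + c • g₂) x₁ = e₁ := by
      show g₁ x₁ + c • g₂ x₁ = e₁
      simp [hg₁def, hg₂def, hφ₁x₁, hφ₂x₁]
    constructor
    · rw [hval]; exact hf₁x
    · refine le_antisymm (Qset_norm_le_one fun x => hb c x hc) ?_
      calc (1:ℝ) = ‖(g₁ + c • g₂) x₁‖ := by rw [hval, he₁]
        _ ≤ ‖g₁ + c • g₂‖ := Qset_coe_le_norm _ _
  have hb₁ : ∀ x : X, ‖g₁ x‖ ≤ 1 := by
    intro x
    simp only [hg₁def, Qbump_apply]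
    rw [norm_smul, Real.norm_eq_abs, he₁, abs_of_nonneg (hφ₁I x).1, mul_one]
    exact (hφ₁I x).2
  have hb₂ : ∀ x : X, ‖g₂ x‖ ≤ 1 := by
    intro x
    simp only [hg₂def, Qbump_apply]
    rw [norm_smul, Real.norm_eq_abs, he₂, abs_of_nonneg (hφ₂I x).1, mul_one]
    exact (hφ₂I x).2
  have hg₁x : μ₁ (g₁ x₁) = 1 := by
    have : g₁ x₁ = e₁ := by simp [hg₁def, hφ₁x₁]
    rw [this]; exact hf₁x
  have hg₁n : ‖g₁‖ = 1 := by
    refine le_antisymm (Qset_norm_le_one hb₁) ?_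
    calc (1:ℝ) = ‖g₁ x₁‖ := by simp [hg₁def, hφ₁x₁, he₁]
      _ ≤ ‖g₁‖ := Qset_coe_le_norm _ _
  have hg₂x : μ₂ (g₂ x₂) = 1 := by
    have : g₂ x₂ = e₂ := by simp [hg₂def, hφ₂x₂]
    rw [this]; exact hf₂x
  have hg₂n : ‖g₂‖ = 1 := by
    refine le_antisymm (Qset_norm_le_one hb₂) ?_
    calc (1:ℝ) = ‖g₂ x₂‖ := by simp [hg₂def, hφ₂x₂, he₂]
      _ ≤ ‖g₂‖ := Qset_coe_le_norm _ _
  -- s = g₁ + g₂ and s' = g₁ - g₂ are in S_{x₁,μ₁}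
  have hs := hmem 1 (by norm_num)
  have hs' := hmem (-1) (by norm_num)
  rw [one_smul] at hs
  have hsub : g₁ + (-1 : ℝ) • g₂ = g₁ - g₂ := by
    rw [neg_one_smul]; abel
  rw [hsub] at hs'
  -- apply ν₁ and ν₂
  set w : F := T (g₁ + g₂) y with hwdef
  set w' : F := T (g₁ - g₂) y with hw'def
  have hν₁w : ν₁ w = 1 := hT₁ _ hs.1 hs.2
  have hν₁w' : ν₁ w' = 1 := hT₁ _ hs'.1 hs'.2
  have hν₂g₂ : ν₂ (T g₂ y) = 1 := hT₂ _ hg₂x hg₂n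
  have hν₁g₁ : ν₁ (T g₁ y) = 1 := hT₁ _ hg₁x hg₁n
  -- norms of w and w'
  have hwn : ‖w‖ = 1 := by
    refine le_antisymm ?_ (Qset_one_le_norm ν₁ hν₁ hν₁w)
    calc ‖w‖ ≤ ‖T (g₁ + g₂)‖ := Qset_coe_le_norm _ _
      _ = ‖g₁ + g₂‖ := T.norm_map _
      _ = 1 := hs.2
  have hw'n : ‖w'‖ = 1 := by
    refine le_antisymm ?_ (Qset_one_le_norm ν₁ hν₁ hν₁w')
    calc ‖w'‖ ≤ ‖T (g₁ - g₂)‖ := Qset_coe_le_norm _ _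
      _ = ‖g₁ - g₂‖ := T.norm_map _
      _ = 1 := hs'.2
  -- w ≠ w' since ν₂ (w - w') = 2
  have hsum : w + w' = (2:ℝ) • T g₁ y := by
    have h : (g₁ + g₂) + (g₁ - g₂) = (2:ℝ) • g₁ := by
      rw [two_smul]; abel
    calc w + w' = (T ((g₁ + g₂) + (g₁ - g₂))) y := by
          rw [map_add, ZeroAtInftyContinuousMap.add_apply]
      _ = (T ((2:ℝ) • g₁)) y := by rw [h]
      _ = (2:ℝ) • T g₁ y := by
          rw [map_smul, ZeroAtInftyContinuousMap.smul_apply]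
  have hdiff : w - w' = (2:ℝ) • T g₂ y := by
    have h : (g₁ + g₂) - (g₁ - g₂) = (2:ℝ) • g₂ := by
      rw [two_smul]; abel
    calc w - w' = (T ((g₁ + g₂) - (g₁ - g₂))) y := by
          rw [map_sub, ZeroAtInftyContinuousMap.sub_apply]
      _ = (T ((2:ℝ) • g₂)) y := by rw [h]
      _ = (2:ℝ) • T g₂ y := by
          rw [map_smul, ZeroAtInftyContinuousMap.smul_apply]
  have hne : w ≠ w' := by
    intro h
    have h0 : ν₂ (w - w') = 0 := by rw [h, sub_self, map_zero]
    rw [hdiff, map_smul, smul_eq_mul, hν₂g₂] at h0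
    norm_num at h0
  -- strict convexity gives the contradiction
  have hlt : ‖w + w'‖ < 2 := hF w w' hne hwn hw'n
  have hge : (2:ℝ) ≤ ‖w + w'‖ := by
    rw [hsum, norm_smul, Real.norm_ofNat]
    nlinarith [Qset_one_le_norm ν₁ hν₁ hν₁g₁]
  linarith
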